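/- Let q ≥ 2, δ ≥ 1, and define β_δ(n) = Σ_{l≥0} ε_l(n)·ε_{l+δ}(n), where ε_l(n) are the base-q digits of n. Then β_δ is (δ+1)-recursive: for all n ≥ 1 and all (x_δ, x_{δ-1}, ..., x_0) ∈ {0,...,q-1}^{δ+1}, β_δ(q^{δ+1} n + Σ_{j=0}^{δ} x_j q^j) = β_δ(q^δ n + Σ_{j=1}^{δ} x_j q^{j-1}) + x_δ·x_0. -/

import Mathlib

/-- The `l`-th digit of `n` in base `q`. -/
def digit (q l n : ℕ) : ℕ := n / q ^ l % q

lemma digit_eq_zero {q l n : ℕ} (h : n < q ^ l) : digit q l n = 0 := by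
  simp [digit, Nat.div_eq_of_lt h]

lemma digit_shift {q : ℕ} (hq : 0 < q) (l m r : ℕ) (hr : r < q) :
    digit q (l + 1) (q * m + r) = digit q l m := by
  unfold digit
  rw [pow_succ, mul_comm (q ^ l) q, ← Nat.div_div_eq_div_mul,
    Nat.mul_add_div hq, Nat.div_eq_of_lt hr, add_zero]

lemma sum_ext (q δ m K : ℕ) (hq : 2 ≤ q) (hK : m + 1 ≤ K) :
    ∑ l ∈ Finset.range (m + 1), digit q l m * digit q (l + δ) m
      = ∑ l ∈ Finset.range K, digit q l m * digit q (l + δ) m := by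
  apply Finset.sum_subset (Finset.range_subset_range.2 hK)
  intro l hl hl'
  simp only [Finset.mem_range, not_lt] at hl hl'
  have h1 : m < 2 ^ l := lt_of_lt_of_le (by omega : m < l) (Nat.lt_two_pow_self (n := l)).le
  have h2 : (2:ℕ) ^ l ≤ q ^ l := Nat.pow_le_pow_left hq l
  rw [digit_eq_zero (lt_of_lt_of_le h1 h2), zero_mul]

lemma key (q δ m r : ℕ) (hq : 2 ≤ q) (hm : 1 ≤ m) (hr : r < q)
    (b : ℕ → ℕ)
    (hb : ∀ s, b s = ∑ l ∈ Finset.range (s + 1), digit q l s * digit q (l + δ) s) :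
    b (q * m + r) = b m + r * digit q δ (q * m + r) := by
  have hq0 : 0 < q := by omega
  have hN : m + 1 ≤ q * m + r := by nlinarith
  rw [hb, hb, Finset.sum_range_succ']
  have h0 : digit q 0 (q * m + r) = r := by
    simp [digit, Nat.mul_add_mod, Nat.mod_eq_of_lt hr]
  have hcong : ∀ l ∈ Finset.range (q * m + r),
      digit q (l + 1) (q * m + r) * digit q (l + 1 + δ) (q * m + r)
        = digit q l m * digit q (l + δ) m := by
    intro l _
    rw [digit_shift hq0 l m r hr, show l + 1 + δ = (l + δ) + 1 by ring,
      digit_shift hq0 (l + δ) m r hr]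
  rw [Finset.sum_congr rfl hcong, sum_ext q δ m (q * m + r) hq hN, h0, zero_add]

lemma fin_sum_lt (q : ℕ) (hq : 2 ≤ q) : ∀ k (c : Fin k → ℕ), (∀ j, c j < q) →
    ∑ j : Fin k, c j * q ^ (j : ℕ) < q ^ k := by
  intro k
  induction k with
  | zero => intro c _; simp
  | succ k ih =>
    intro c hc
    rw [Fin.sum_univ_castSucc]
    have h1 : (∑ j : Fin k, c j.castSucc * q ^ (j : ℕ)) < q ^ k :=
      ih (fun j => c j.castSucc) (fun j => hc _)
    have h2 : c (Fin.last k) * q ^ k ≤ (q - 1) * q ^ k :=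
      Nat.mul_le_mul_right _ (by have := hc (Fin.last k); omega)
    simp only [Fin.coe_castSucc, Fin.val_last]
    have h3 : q ^ k + (q - 1) * q ^ k = q ^ (k + 1) := by
      have : q ^ k + (q - 1) * q ^ k = (1 + (q - 1)) * q ^ k := by ring
      rw [this, show 1 + (q - 1) = q by omega, pow_succ, mul_comm]
    omega

theorem stmt_16 (q δ : ℕ) (hq : 2 ≤ q) (hδ : 1 ≤ δ)
    (b : ℕ → ℕ)
    (hb : ∀ m, b m = ∑ l ∈ Finset.range (m + 1), digit q l m * digit q (l + δ) m) :
    ∀ n : ℕ, 1 ≤ n → ∀ x : Fin (δ + 1) → ℕ, (∀ j, x j < q) →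
      b (q ^ (δ + 1) * n + ∑ j : Fin (δ + 1), x j * q ^ (j : ℕ)) =
        b (q ^ δ * n + ∑ j : Fin δ, x j.succ * q ^ (j : ℕ)) + x (Fin.last δ) * x 0 := by
  intro n hn x hx
  have hq0 : 0 < q := by omega
  set M : ℕ := q ^ δ * n + ∑ j : Fin δ, x j.succ * q ^ (j : ℕ) with hM
  -- N = q * M + x 0
  have hsplit : q ^ (δ + 1) * n + ∑ j : Fin (δ + 1), x j * q ^ (j : ℕ)
      = q * M + x 0 := by
    rw [Fin.sum_univ_succ]
    simp only [Fin.val_zero, Fin.val_succ, pow_zero, mul_one]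
    rw [hM, Nat.mul_add, Finset.mul_sum]
    have : ∀ j : Fin δ, x j.succ * q ^ ((j : ℕ) + 1) = q * (x j.succ * q ^ (j : ℕ)) := by
      intro j; ring
    rw [Finset.sum_congr rfl (fun j _ => this j)]
    ring
  have hM1 : 1 ≤ M := by
    have : 1 ≤ q ^ δ * n := Nat.one_le_iff_ne_zero.2 (by positivity)
    omega
  rw [hsplit, key q δ M (x 0) hq hM1 (hx 0) b hb]
  congr 1
  -- digit q δ (q * M + x 0) = x (Fin.last δ)
  have hd : digit q δ (q * M + x 0) = x (Fin.last δ) := by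
    rw [← hsplit]
    have hdecomp : q ^ (δ + 1) * n + ∑ j : Fin (δ + 1), x j * q ^ (j : ℕ)
        = q ^ δ * (q * n + x (Fin.last δ)) + ∑ j : Fin δ, x j.castSucc * q ^ (j : ℕ) := by
      rw [Fin.sum_univ_castSucc]
      simp only [Fin.coe_castSucc, Fin.val_last]
      ring
    have ht : (∑ j : Fin δ, x j.castSucc * q ^ (j : ℕ)) < q ^ δ :=
      fin_sum_lt q hq δ (fun j => x j.castSucc) (fun j => hx _)
    rw [hdecomp]
    unfold digit
    rw [Nat.mul_add_div (by positivity), Nat.div_eq_of_lt ht, add_zero,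
      Nat.mul_add_mod, Nat.mod_eq_of_lt (hx _)]
  rw [hd, mul_comm]
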